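/- Let b ≥ 2 be an integer, λ ∈ (1/b, 1), and φ : ℝ → ℝ^d a ℤ-periodic C² function. For every 𝐣 ∈ Σ, every finite word 𝐢 ∈ Λ^n (n ≥ 1), and every (x,y) ∈ [0,1)×ℝ^d, the transformation identity π_𝐣(g_𝐢(x,y)) = λ^n · π_{𝐢*𝐣}(x,y) + π_𝐣(g_𝐢(0,0)) holds. -/

import Mathlib

open MeasureTheory Filter Metric Set Function
open scoped ENNReal NNReal Topology

noncomputable section

namespace Weier

/-- `ℝ^d` as a Euclidean space. -/
abbrev Ed (d : ℕ) : Type := EuclideanSpace ℝ (Fin d)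

/-- The Weierstrass-type function `W^φ_{λ,b}(x) = ∑ λ^n φ(b^n x)`. -/
def Wf {E : Type} [NormedAddCommGroup E] [NormedSpace ℝ E]
    (b : ℕ) (lam : ℝ) (φ : ℝ → E) (x : ℝ) : E :=
  ∑' n : ℕ, lam ^ n • φ ((b : ℝ) ^ n * x)

/-- The graph of `W` over `[0,1)`, as a subset of `ℝ × ℝ^d = ℝ^{1+d}`. -/
def graphW {E : Type} [NormedAddCommGroup E] [NormedSpace ℝ E]
    (b : ℕ) (lam : ℝ) (φ : ℝ → E) : Set (ℝ × E) :=
  (fun x => (x, Wf b lam φ x)) '' Set.Ico (0 : ℝ) 1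

/-- Minimal number of `ε`-balls needed to cover `E`. -/
def coverNum {X : Type} [PseudoMetricSpace X] (E : Set X) (ε : ℝ) : ℕ :=
  sInf {n : ℕ | ∃ s : Finset X, s.card = n ∧ E ⊆ ⋃ x ∈ s, Metric.ball x ε}

/-- `E` has box (Minkowski) dimension `D`. -/
def HasBoxDim {X : Type} [PseudoMetricSpace X] (E : Set X) (D : ℝ) : Prop :=
  Tendsto (fun ε : ℝ => Real.log (coverNum E ε) / Real.log (1 / ε)) (𝓝[>] (0 : ℝ)) (𝓝 D)

/-- The upper box dimension of `E`. -/
def upperBoxDim {X : Type} [PseudoMetricSpace X] (E : Set X) : ℝ :=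
  limsup (fun ε : ℝ => Real.log (coverNum E ε) / Real.log (1 / ε)) (𝓝[>] (0 : ℝ))

/-- Orthogonal projection onto a subspace `V`, as a self-map of the ambient space. -/
def projS {d : ℕ} (V : Submodule ℝ (Ed d)) (x : Ed d) : Ed d :=
  (V.orthogonalProjectionOnto x : Ed d)

/-- `q(φ,λ,b)`: the maximal dimension of a subspace `V ≤ ℝ^d` such that
`π_V ∘ W^φ_{λ,b}` is Lipschitz. -/
def qval (d b : ℕ) (lam : ℝ) (φ : ℝ → Ed d) : ℕ :=
  sSup {n : ℕ | ∃ V : Submodule ℝ (Ed d), Module.finrank ℝ V = n ∧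
    ∃ K : ℝ≥0, LipschitzWith K fun x => projS V (Wf b lam φ x)}

/-- `p(φ,b) = min_{λ ∈ (1/b,1)} q(φ,λ,b)`. -/
def pval (d b : ℕ) (φ : ℝ → Ed d) : ℕ :=
  sInf {n : ℕ | ∃ lam ∈ Set.Ioo (1 / (b : ℝ)) 1, qval d b lam φ = n}

/-- `Y^φ_{λ,b}(x,𝐣) = -∑_{n≥1} γ^n φ'((x + j₁ + j₂ b + ⋯ + j_n b^{n-1})/b^n)`
with `γ = 1/(bλ)`; here `j k` stands for `j_{k+1}`. -/
def Yf {E : Type} [NormedAddCommGroup E] [NormedSpace ℝ E]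
    (b : ℕ) (lam : ℝ) (φ : ℝ → E) (x : ℝ) (j : ℕ → Fin b) : E :=
  -∑' n : ℕ, (1 / ((b : ℝ) * lam)) ^ (n + 1) •
      deriv φ ((x + ∑ k ∈ Finset.range (n + 1), ((j k : ℕ) : ℝ) * (b : ℝ) ^ k) / (b : ℝ) ^ (n + 1))

/-- Condition (H*): all the functions `Y(·,𝐣)`, `𝐣 ∈ Σ`, coincide. -/
def CondHstar {E : Type} [NormedAddCommGroup E] [NormedSpace ℝ E]
    (b : ℕ) (lam : ℝ) (φ : ℝ → E) : Prop :=
  ∀ i j : ℕ → Fin b, ∀ x : ℝ, Yf b lam φ x i = Yf b lam φ x j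

/-- Condition (H) for `φ : ℝ → ℝ^d`: for every one-dimensional subspace `A` and all
`𝐢 ≠ 𝐣`, the function `Y^{π_A φ}(·,𝐢) - Y^{π_A φ}(·,𝐣)` is not identically zero. -/
def CondH (d b : ℕ) (lam : ℝ) (φ : ℝ → Ed d) : Prop :=
  ∀ A : Submodule ℝ (Ed d), Module.finrank ℝ A = 1 →
    ∀ i j : ℕ → Fin b, i ≠ j →
      ¬ ∀ x : ℝ, Yf b lam (fun t => projS A (φ t)) x i = Yf b lam (fun t => projS A (φ t)) x j

/-- Condition (H) in the one-dimensional (real-valued) case. -/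
def CondH1 (b : ℕ) (lam : ℝ) (φ : ℝ → ℝ) : Prop :=
  ∀ i j : ℕ → Fin b, i ≠ j → ¬ ∀ x : ℝ, Yf b lam φ x i = Yf b lam φ x j

/-- `q'(φ,λ,b)`: the maximal dimension of a subspace `V ≤ ℝ^d` such that `π_V φ`
satisfies condition (H*). -/
def q'val (d b : ℕ) (lam : ℝ) (φ : ℝ → Ed d) : ℕ :=
  sSup {n : ℕ | ∃ V : Submodule ℝ (Ed d), Module.finrank ℝ V = n ∧
    CondHstar b lam fun x => projS V (φ x)}

/-- `p'(φ,b) = min_{λ ∈ (1/b,1)} q'(φ,λ,b)`. -/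
def p'val (d b : ℕ) (φ : ℝ → Ed d) : ℕ :=
  sInf {n : ℕ | ∃ lam ∈ Set.Ioo (1 / (b : ℝ)) 1, q'val d b lam φ = n}

/-- The lift `μ` of Lebesgue measure on `[0,1)` to the graph of `W`. -/
def muW (d b : ℕ) (lam : ℝ) (φ : ℝ → Ed d) : Measure (ℝ × Ed d) :=
  Measure.map (fun x => (x, Wf b lam φ x)) (volume.restrict (Set.Ico (0 : ℝ) 1))

/-- `Γ_𝐣(x) = ∫₀ˣ Y(t,𝐣) dt`. -/
def Gam {E : Type} [NormedAddCommGroup E] [NormedSpace ℝ E]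
    (b : ℕ) (lam : ℝ) (φ : ℝ → E) (j : ℕ → Fin b) (x : ℝ) : E :=
  ∫ t in (0 : ℝ)..x, Yf b lam φ t j

/-- The flow projection `π_𝐣(x,y) = y - Γ_𝐣(x)`. -/
def pj {E : Type} [NormedAddCommGroup E] [NormedSpace ℝ E] [CompleteSpace E]
    (b : ℕ) (lam : ℝ) (φ : ℝ → E) (j : ℕ → Fin b) (p : ℝ × E) : E :=
  p.2 - Gam b lam φ j p.1

/-- `ν` is the Bernoulli product on `Σ = Λ^{ℤ₊}` of the uniform measure on `Λ = {0,…,b-1}`: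
it is a probability measure giving every cylinder of length `n` measure `b^{-n}`. -/
def IsBernoulli (b : ℕ) (ν : Measure (ℕ → Fin b)) : Prop :=
  IsProbabilityMeasure ν ∧
    ∀ (n : ℕ) (w : Fin n → Fin b), ν {j | ∀ k : Fin n, j (k : ℕ) = w k} = (1 / (b : ℝ≥0∞)) ^ n

/-- A measure is exact dimensional with dimension `β` if
`log ω(B(x,r))/log r → β` as `r → 0⁺` for `ω`-a.e. `x`. -/
def IsExactDim {X : Type} [PseudoMetricSpace X] [MeasurableSpace X]
    (ω : Measure X) (β : ℝ) : Prop :=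
  ∀ᵐ x ∂ω, Tendsto (fun r : ℝ => Real.log (ω (Metric.ball x r)).toReal / Real.log r)
    (𝓝[>] (0 : ℝ)) (𝓝 β)

/-- The level-`n` `b`-adic cell of `ℝ^d` with index `k`. -/
def bcell (d b n : ℕ) (k : Fin d → ℤ) : Set (Ed d) :=
  {x | ∀ i, (k i : ℝ) / (b : ℝ) ^ n ≤ x i ∧ x i < ((k i : ℝ) + 1) / (b : ℝ) ^ n}

/-- The entropy `H(ω, ℒ_n)` (with logarithms in base `b`) of a measure with respect to
the level-`n` `b`-adic partition of `ℝ^d`. -/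
def entH (d b n : ℕ) (ω : Measure (Ed d)) : ℝ :=
  ∑' k : Fin d → ℤ, -((ω (bcell d b n k)).toReal * Real.logb b (ω (bcell d b n k)).toReal)

/-- The level-`i` `b`-adic cell containing `x`. -/
def cellOf (d b i : ℕ) (x : Ed d) : Set (Ed d) :=
  bcell d b i fun t => ⌊x t * (b : ℝ) ^ i⌋

/-- The component measure `ω_{x,i}`: the normalized restriction of `ω` to the level-`i`
`b`-adic cell containing `x`. -/
def compMeas (d b i : ℕ) (ω : Measure (Ed d)) (x : Ed d) : Measure (Ed d) :=
  (ω (cellOf d b i x))⁻¹ • ω.restrict (cellOf d b i x)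

/-- `ω` is `(V,ε,m)`-saturated. -/
def Saturated (d b : ℕ) (ω : Measure (Ed d)) (V : Submodule ℝ (Ed d)) (ε : ℝ) (m : ℕ) : Prop :=
  (1 / (m : ℝ)) * entH d b m ω ≥
    (1 / (m : ℝ)) * entH d b m (Measure.map (projS Vᗮ) ω) + (Module.finrank ℝ V : ℝ) - ε

/-- `ω` is `(V,ε)`-concentrated: some translate `V + y` of `V` carries `1-ε` of the mass
of `ω` within distance `ε`. -/
def Concentrated (d : ℕ) (ω : Measure (Ed d)) (V : Submodule ℝ (Ed d)) (ε : ℝ) : Prop :=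
  ∃ y : Ed d, 1 - ε ≤ (ω {z | ∃ v ∈ V, dist z (v + y) ≤ ε}).toReal

/-- The local inverse branch `g_i(x,y) = ((x+i)/b, λ y + φ((x+i)/b))`. -/
def gmap {E : Type} [NormedAddCommGroup E] [NormedSpace ℝ E]
    (b : ℕ) (lam : ℝ) (φ : ℝ → E) (i : Fin b) (p : ℝ × E) : ℝ × E :=
  ((p.1 + (i : ℕ)) / (b : ℝ), lam • p.2 + φ ((p.1 + (i : ℕ)) / (b : ℝ)))

/-- `g_𝐢 = g_{i₁} ∘ ⋯ ∘ g_{i_n}` for a finite word `𝐢 = [i₁,…,i_n]`. -/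
def gword {E : Type} [NormedAddCommGroup E] [NormedSpace ℝ E]
    (b : ℕ) (lam : ℝ) (φ : ℝ → E) (l : List (Fin b)) : ℝ × E → ℝ × E :=
  l.foldr (fun i f => gmap b lam φ i ∘ f) id

/-- Concatenation of a finite word with an infinite word. -/
def wcat {b : ℕ} (l : List (Fin b)) (j : ℕ → Fin b) : ℕ → Fin b :=
  fun k => if h : k < l.length then l.get ⟨k, h⟩ else j (k - l.length)

/-- The `m`-th Fourier coefficient `a_m(ψ) = ∫₀¹ ψ(x) e^{-2πimx} dx` of a
`ℤ`-periodic function `ψ : ℝ → ℝ`. -/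
def fCoeff (ψ : ℝ → ℝ) (m : ℤ) : ℂ :=
  ∫ x in (0 : ℝ)..1, (ψ x : ℂ) * Complex.exp (-(2 * (Real.pi : ℂ) * Complex.I * (m : ℂ) * (x : ℂ)))

/-- `tEnum b k` is `t_{k+1}`, where `t₁ < t₂ < ⋯` enumerates the positive integers
not divisible by `b`. -/
def tEnum (b : ℕ) (k : ℕ) : ℕ :=
  Nat.nth (fun t => 0 < t ∧ ¬ b ∣ t) k

/-- The vector `(R_{1,k+1}(λ),…,R_{d,k+1}(λ))` of real parts. -/
def Rvec (d b : ℕ) (lam : ℝ) (φ : ℝ → Ed d) (k : ℕ) : Ed d :=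
  (EuclideanSpace.equiv (Fin d) ℝ).symm fun j =>
    ∑' n : ℕ, (fCoeff (fun x => φ x j) ((tEnum b k : ℤ) * (b : ℤ) ^ n)).re * lam⁻¹ ^ n

/-- The vector `(I_{1,k+1}(λ),…,I_{d,k+1}(λ))` of imaginary parts. -/
def Ivec (d b : ℕ) (lam : ℝ) (φ : ℝ → Ed d) (k : ℕ) : Ed d :=
  (EuclideanSpace.equiv (Fin d) ℝ).symm fun j =>
    ∑' n : ℕ, (fCoeff (fun x => φ x j) ((tEnum b k : ℤ) * (b : ℤ) ^ n)).im * lam⁻¹ ^ n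

/-- `Ker A_{λ,m} = {y : yA_{λ,m} = 0}`, i.e. the vectors orthogonal to the first `m`
columns `R_{·,1},…,R_{·,m}` and `I_{·,1},…,I_{·,m}`. -/
def kerA (d b : ℕ) (lam : ℝ) (φ : ℝ → Ed d) (m : ℕ) : Submodule ℝ (Ed d) :=
  ⨅ k ∈ Finset.range m,
    (LinearMap.ker (innerSL ℝ (Rvec d b lam φ k) : Ed d →ₗ[ℝ] ℝ) ⊓ LinearMap.ker (innerSL ℝ (Ivec d b lam φ k) : Ed d →ₗ[ℝ] ℝ))

/-- The `C^r` norm `‖f‖_r = ∑_{k=0}^r ‖f^{(k)}‖_∞`. -/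
def cnorm (d r : ℕ) (f : ℝ → Ed d) : ℝ :=
  ∑ k ∈ Finset.range (r + 1), ⨆ x : ℝ, ‖iteratedDeriv k f x‖



section TransformationAux

set_option linter.unusedSectionVars false

variable {E : Type} [NormedAddCommGroup E] [NormedSpace ℝ E] [CompleteSpace E]
variable {b : ℕ} {lam : ℝ} {φ : ℝ → E}

lemma aux_gamma_pos (hb : 2 ≤ b) (hlam : lam ∈ Set.Ioo (1 / (b : ℝ)) 1) :
    0 < 1 / ((b : ℝ) * lam) := by
  have hb0 : (0:ℝ) < b := by positivity
  have hl0 : 0 < lam := lt_trans (by positivity) hlam.1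
  positivity

lemma aux_gamma_lt_one (hb : 2 ≤ b) (hlam : lam ∈ Set.Ioo (1 / (b : ℝ)) 1) :
    1 / ((b : ℝ) * lam) < 1 := by
  have hb0 : (0:ℝ) < b := by positivity
  have hl0 : 0 < lam := lt_trans (by positivity) hlam.1
  rw [div_lt_one (by positivity)]
  calc (1:ℝ) = b * (1/b) := by field_simp
    _ < b * lam := by exact mul_lt_mul_of_pos_left hlam.1 hb0

lemma aux_deriv_periodic {φ : ℝ → E} (hper : Periodic φ 1) : Periodic (deriv φ) 1 := by
  intro x
  have h : (fun y => φ (y + 1)) = φ := funext fun y => hper y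
  calc deriv φ (x + 1) = deriv (fun y => φ (y + 1)) x := (deriv_comp_add_const φ 1 x).symm
    _ = deriv φ x := by rw [h]

lemma aux_bound_of_periodic {f : ℝ → E} (hper : Periodic f 1) (hc : Continuous f) :
    ∃ M : ℝ, 0 ≤ M ∧ ∀ x, ‖f x‖ ≤ M := by
  obtain ⟨C, hC⟩ := (isCompact_Icc (a := (0:ℝ)) (b := 1)).exists_bound_of_continuousOn
    hc.continuousOn
  refine ⟨max C 0, le_max_right _ _, fun x => ?_⟩
  have h1 : f x = f (Int.fract x) := by
    have h2 := hper.sub_int_mul_eq (x := x) ⌊x⌋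
    rw [mul_one] at h2
    rw [Int.fract, h2]
  rw [h1]
  exact le_max_of_le_left (hC _ ⟨Int.fract_nonneg x, (Int.fract_lt_one x).le⟩)

lemma aux_deriv_bound (hper : Periodic φ 1) (hC2 : ContDiff ℝ 2 φ) :
    ∃ M : ℝ, 0 ≤ M ∧ ∀ x, ‖deriv φ x‖ ≤ M :=
  aux_bound_of_periodic (aux_deriv_periodic hper) (hC2.continuous_deriv one_le_two)

lemma aux_term_summable (hb : 2 ≤ b) (hlam : lam ∈ Set.Ioo (1 / (b : ℝ)) 1)
    (hper : Periodic φ 1) (hC2 : ContDiff ℝ 2 φ) (c : ℕ → ℝ) :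
    Summable (fun n : ℕ => (1 / ((b : ℝ) * lam)) ^ (n + 1) • deriv φ (c n)) := by
  obtain ⟨M, hM0, hM⟩ := aux_deriv_bound hper hC2
  set γ := 1 / ((b : ℝ) * lam)
  have hγ0 := aux_gamma_pos hb hlam
  have hγ1 := aux_gamma_lt_one hb hlam
  apply Summable.of_norm_bounded (g := fun n => γ ^ n * (γ * M))
    ((summable_geometric_of_lt_one hγ0.le hγ1).mul_right _)
  intro n
  rw [norm_smul, norm_pow, Real.norm_eq_abs, abs_of_pos hγ0]
  calc γ ^ (n+1) * ‖deriv φ (c n)‖ ≤ γ ^ (n+1) * M := by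
        exact mul_le_mul_of_nonneg_left (hM _) (by positivity)
    _ = γ ^ n * (γ * M) := by ring

lemma aux_Yf_continuous (hb : 2 ≤ b) (hlam : lam ∈ Set.Ioo (1 / (b : ℝ)) 1)
    (hper : Periodic φ 1) (hC2 : ContDiff ℝ 2 φ) (j : ℕ → Fin b) :
    Continuous (fun x => Yf b lam φ x j) := by
  obtain ⟨M, hM0, hM⟩ := aux_deriv_bound hper hC2
  set γ := 1 / ((b : ℝ) * lam) with hγ
  have hγ0 := aux_gamma_pos hb hlam
  have hγ1 := aux_gamma_lt_one hb hlam
  unfold Yf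
  apply Continuous.neg
  apply continuous_tsum (u := fun n => γ ^ n * (γ * M))
  · intro n
    exact (((hC2.continuous_deriv one_le_two).comp (by continuity))).const_smul _
  · exact (summable_geometric_of_lt_one hγ0.le hγ1).mul_right _
  · intro n x
    rw [norm_smul, norm_pow, Real.norm_eq_abs, abs_of_pos hγ0]
    calc γ ^ (n+1) * ‖deriv φ _‖ ≤ γ ^ (n+1) * M :=
          mul_le_mul_of_nonneg_left (hM _) (by positivity)
      _ = γ ^ n * (γ * M) := by ring

lemma aux_Yf_rec (hb : 2 ≤ b) (hlam : lam ∈ Set.Ioo (1 / (b : ℝ)) 1)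
    (hper : Periodic φ 1) (hC2 : ContDiff ℝ 2 φ) (i : Fin b) (j : ℕ → Fin b) (x : ℝ) :
    Yf b lam φ x (wcat [i] j) =
      (1 / ((b : ℝ) * lam)) •
        (Yf b lam φ ((x + (i : ℕ)) / b) j - deriv φ ((x + (i : ℕ)) / b)) := by
  have hb0 : (0:ℝ) < b := by positivity
  have hbne : ((b:ℝ)) ≠ 0 := ne_of_gt hb0
  set γ := 1 / ((b : ℝ) * lam) with hγ
  have hw0 : ((wcat [i] j 0 : ℕ) : ℝ) = (i : ℕ) := by simp [wcat]
  have hwS : ∀ k, wcat [i] j (k + 1) = j k := by intro k; simp [wcat]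
  have hsum2 : Summable (fun n : ℕ => γ ^ (n + 1) • deriv φ
      ((x + ∑ k ∈ Finset.range (n + 1), ((wcat [i] j k : ℕ) : ℝ) * (b : ℝ) ^ k) / (b : ℝ) ^ (n + 1))) :=
    aux_term_summable hb hlam hper hC2 _
  unfold Yf
  rw [Summable.tsum_eq_zero_add hsum2]
  have h0 : γ ^ (0 + 1) • deriv φ
      ((x + ∑ k ∈ Finset.range (0 + 1), ((wcat [i] j k : ℕ) : ℝ) * (b : ℝ) ^ k) / (b : ℝ) ^ (0 + 1)) =
      γ • deriv φ ((x + (i : ℕ)) / b) := by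
    simp [hw0]
  have hstep : ∀ n : ℕ, γ ^ (n + 1 + 1) • deriv φ
      ((x + ∑ k ∈ Finset.range (n + 1 + 1), ((wcat [i] j k : ℕ) : ℝ) * (b : ℝ) ^ k) / (b : ℝ) ^ (n + 1 + 1)) =
      γ • (γ ^ (n + 1) • deriv φ
        (((x + (i : ℕ)) / b + ∑ k ∈ Finset.range (n + 1), ((j k : ℕ) : ℝ) * (b : ℝ) ^ k) / (b : ℝ) ^ (n + 1))) := by
    intro n
    rw [smul_smul, ← pow_succ']
    congr 2
    rw [Finset.sum_range_succ' (fun k => ((wcat [i] j k : ℕ) : ℝ) * (b : ℝ) ^ k)]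
    simp only [hwS, hw0, pow_zero, mul_one]
    have hSb : ∑ k ∈ Finset.range (n + 1), ((j k : ℕ) : ℝ) * (b : ℝ) ^ (k + 1) =
        b * ∑ k ∈ Finset.range (n + 1), ((j k : ℕ) : ℝ) * (b : ℝ) ^ k := by
      rw [Finset.mul_sum]; congr 1; funext k; ring
    rw [hSb]
    field_simp
    ring
  simp_rw [hstep, h0]
  rw [Summable.tsum_const_smul _ (aux_term_summable hb hlam hper hC2 _)]
  rw [hγ]
  module

lemma aux_Gam_rec (hb : 2 ≤ b) (hlam : lam ∈ Set.Ioo (1 / (b : ℝ)) 1)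
    (hper : Periodic φ 1) (hC2 : ContDiff ℝ 2 φ) (i : Fin b) (j : ℕ → Fin b) (x : ℝ) :
    lam • Gam b lam φ (wcat [i] j) x =
      (Gam b lam φ j ((x + (i : ℕ)) / b) - Gam b lam φ j (((i : ℕ) : ℝ) / b))
        - (φ ((x + (i : ℕ)) / b) - φ (((i : ℕ) : ℝ) / b)) := by
  have hb0 : (0:ℝ) < b := by positivity
  have hbne : ((b:ℝ)) ≠ 0 := ne_of_gt hb0
  have hl0 : 0 < lam := lt_trans (by positivity) hlam.1
  have hcont : Continuous (fun s => Yf b lam φ s j - deriv φ s) :=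
    (aux_Yf_continuous hb hlam hper hC2 j).sub (hC2.continuous_deriv one_le_two)
  have h1 : Gam b lam φ (wcat [i] j) x =
      ∫ t in (0:ℝ)..x, (1 / ((b : ℝ) * lam)) •
        (Yf b lam φ ((t + (i : ℕ)) / b) j - deriv φ ((t + (i : ℕ)) / b)) := by
    unfold Gam
    congr 1
    funext t
    exact aux_Yf_rec hb hlam hper hC2 i j t
  rw [h1, intervalIntegral.integral_smul]
  have h2 : (∫ t in (0:ℝ)..x, (Yf b lam φ ((t + (i : ℕ)) / b) j - deriv φ ((t + (i : ℕ)) / b)))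
      = (b : ℝ) • ∫ s in (((i:ℕ):ℝ)/b)..((x + (i : ℕ))/b), (Yf b lam φ s j - deriv φ s) := by
    have h3 := intervalIntegral.integral_comp_add_right
      (fun u => Yf b lam φ (u / b) j - deriv φ (u / b)) ((i : ℕ) : ℝ) (a := (0:ℝ)) (b := x)
    rw [zero_add] at h3
    rw [h3, intervalIntegral.integral_comp_div (fun u => Yf b lam φ u j - deriv φ u) hbne]
  rw [h2]
  have h4 : (∫ s in (((i:ℕ):ℝ)/b)..((x + (i : ℕ))/b), (Yf b lam φ s j - deriv φ s))
      = (Gam b lam φ j ((x + (i : ℕ)) / b) - Gam b lam φ j (((i : ℕ) : ℝ) / b))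
        - (φ ((x + (i : ℕ)) / b) - φ (((i : ℕ) : ℝ) / b)) := by
    rw [intervalIntegral.integral_sub
      ((aux_Yf_continuous hb hlam hper hC2 j).intervalIntegrable _ _)
      ((hC2.continuous_deriv one_le_two).intervalIntegrable _ _)]
    congr 1
    · unfold Gam
      rw [← intervalIntegral.integral_interval_sub_left
        ((aux_Yf_continuous hb hlam hper hC2 j).intervalIntegrable _ _)
        ((aux_Yf_continuous hb hlam hper hC2 j).intervalIntegrable _ _)]
    · exact intervalIntegral.integral_deriv_eq_sub
        (fun t _ => (hC2.differentiable two_ne_zero).differentiableAt)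
        ((hC2.continuous_deriv one_le_two).intervalIntegrable _ _)
  rw [h4, smul_smul, smul_smul]
  have : lam * (1 / ((b:ℝ) * lam)) * b = 1 := by field_simp
  rw [this, one_smul]

lemma aux_pj_gmap (hb : 2 ≤ b) (hlam : lam ∈ Set.Ioo (1 / (b : ℝ)) 1)
    (hper : Periodic φ 1) (hC2 : ContDiff ℝ 2 φ) (i : Fin b) (j : ℕ → Fin b) (p : ℝ × E) :
    pj b lam φ j (gmap b lam φ i p) =
      lam • pj b lam φ (wcat [i] j) p + pj b lam φ j (gmap b lam φ i (0, 0)) := by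
  obtain ⟨x, y⟩ := p
  simp only [pj, gmap, smul_zero, zero_add, zero_div]
  rw [smul_sub, aux_Gam_rec hb hlam hper hC2 i j x]
  abel

lemma aux_wcat_append {b : ℕ} (l₁ l₂ : List (Fin b)) (j : ℕ → Fin b) :
    wcat (l₁ ++ l₂) j = wcat l₁ (wcat l₂ j) := by
  funext k
  simp only [wcat, List.length_append, List.get_eq_getElem]
  by_cases h1 : k < l₁.length
  · rw [dif_pos (by omega), dif_pos h1, List.getElem_append_left h1]
  · rw [dif_neg h1]
    by_cases h2 : k < l₁.length + l₂.length
    · rw [dif_pos h2, dif_pos (by omega), List.getElem_append_right (by omega)]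
    · rw [dif_neg h2, dif_neg (by omega)]
      congr 1
      omega

lemma aux_pj_zero (j : ℕ → Fin b) : pj b lam φ j ((0 : ℝ), (0 : E)) = 0 := by
  simp [pj, Gam]

lemma aux_gword_cons (i : Fin b) (l : List (Fin b)) (p : ℝ × E) :
    gword b lam φ (i :: l) p = gmap b lam φ i (gword b lam φ l p) := rfl

lemma aux_main (hb : 2 ≤ b) (hlam : lam ∈ Set.Ioo (1 / (b : ℝ)) 1)
    (hper : Periodic φ 1) (hC2 : ContDiff ℝ 2 φ) :
    ∀ l : List (Fin b), l ≠ [] → ∀ j : ℕ → Fin b, ∀ p : ℝ × E,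
      pj b lam φ j (gword b lam φ l p) =
        lam ^ l.length • pj b lam φ (wcat l.reverse j) p +
          pj b lam φ j (gword b lam φ l ((0 : ℝ), (0 : E))) := by
  intro l
  induction l with
  | nil => intro h; exact absurd rfl h
  | cons i l' ih =>
    intro _ j p
    rcases eq_or_ne l' [] with h | h
    · subst h
      simp only [aux_gword_cons, List.length_cons, List.length_nil, List.reverse_cons,
        List.reverse_nil, List.nil_append, pow_one, pow_zero]
      have := aux_pj_gmap hb hlam hper hC2 i j (gword b lam φ [] p)
      simp only [gword, List.foldr_nil, id_eq] at this ⊢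
      simpa using this
    · have key := aux_pj_gmap hb hlam hper hC2 i j (gword b lam φ l' p)
      have key0 := aux_pj_gmap hb hlam hper hC2 i j (gword b lam φ l' ((0:ℝ), (0:E)))
      have ihp := ih h (wcat [i] j) p
      rw [aux_gword_cons, key, ihp, aux_gword_cons, key0, List.reverse_cons, aux_wcat_append]
      simp only [List.length_cons, smul_add, smul_smul, ← pow_succ']
      abel

end TransformationAux

/-- Transformation identity: `π_𝐣(g_𝐢(x,y)) = λ^{|𝐢|} π_{𝐢*𝐣}(x,y) + π_𝐣(g_𝐢(0,0))` for any
nonempty finite word `𝐢`, any `𝐣 ∈ Σ` and `(x,y) ∈ [0,1) × ℝ^d`. -/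
theorem transformation_identity (d b : ℕ) (hb : 2 ≤ b) (lam : ℝ)
    (hlam : lam ∈ Set.Ioo (1 / (b : ℝ)) 1) (φ : ℝ → Ed d)
    (hper : Function.Periodic φ 1) (hC2 : ContDiff ℝ 2 φ) :
    ∀ l : List (Fin b), l ≠ [] → ∀ j : ℕ → Fin b,
      ∀ x ∈ Set.Ico (0 : ℝ) 1, ∀ y : Ed d,
        pj b lam φ j (gword b lam φ l (x, y)) =
          lam ^ l.length • pj b lam φ (wcat l.reverse j) (x, y) +
            pj b lam φ j (gword b lam φ l ((0 : ℝ), (0 : Ed d))) := by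
  intro l hl j x _ y
  exact aux_main hb hlam hper hC2 l hl j (x, y)

end Weier
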